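/- Let (u,p) ∈ V × Q and suppose v_p ∈ V satisfies b(v_p, p) = |p|_B² and a(v_p, v_p) ≤ β₀⁻² |p|_B². Then the combined test pair (v,q) := (u + β₀²·v_p, −p) satisfies the lower bound 𝒜((u,p),(v,q)) ≥ (1/2)·a(u,u) + (1/2)·β₀²·|p|_B² + c(p,p). -/
import Mathlib


/-- The coupled perturbed saddle-point bilinear form
`𝒜((u,p),(v,q)) = a(u,v) + b(v,p) + b(u,q) − c(p,q)`. -/
noncomputable def coupledForm {V Q : Type*} [AddCommGroup V] [Module ℝ V]
    [AddCommGroup Q] [Module ℝ Q]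
    (a : V →ₗ[ℝ] V →ₗ[ℝ] ℝ) (b : V →ₗ[ℝ] Q →ₗ[ℝ] ℝ) (c : Q →ₗ[ℝ] Q →ₗ[ℝ] ℝ)
    (x y : V × Q) : ℝ :=
  a x.1 y.1 + b y.1 x.2 + b x.1 y.2 - c x.2 y.2

/-- If `v_p` satisfies `b(v_p,p) = |p|_B²` and `a(v_p,v_p) ≤ β₀⁻² |p|_B²`, then the pair
`(v,q) := (u + β₀² v_p, −p)` satisfies
`𝒜((u,p),(v,q)) ≥ (1/2) a(u,u) + (1/2) β₀² |p|_B² + c(p,p)`. -/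
theorem coupledForm_combined_test_lower_bound {V Q : Type*} [AddCommGroup V] [Module ℝ V]
    [AddCommGroup Q] [Module ℝ Q]
    (a : V →ₗ[ℝ] V →ₗ[ℝ] ℝ) (b : V →ₗ[ℝ] Q →ₗ[ℝ] ℝ) (c : Q →ₗ[ℝ] Q →ₗ[ℝ] ℝ)
    (Bn : Seminorm ℝ Q) (β₀ : ℝ) (hβ₀ : 0 < β₀)
    (ha_symm : ∀ u v : V, a u v = a v u) (ha_pos : ∀ u : V, 0 ≤ a u u)
    (hc_symm : ∀ p q : Q, c p q = c q p) (hc_pos : ∀ q : Q, 0 ≤ c q q)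
    (u : V) (p : Q) (vp : V)
    (hvp_b : b vp p = (Bn p) ^ 2)
    (hvp_a : a vp vp ≤ β₀⁻¹ ^ 2 * (Bn p) ^ 2) :
    coupledForm a b c (u, p) (u + β₀ ^ 2 • vp, -p) ≥
      1 / 2 * a u u + 1 / 2 * β₀ ^ 2 * (Bn p) ^ 2 + c p p := by
  have key := ha_pos (u + β₀ ^ 2 • vp)
  have hsym := ha_symm vp u
  have hβ : (0:ℝ) < β₀ ^ 2 := by positivity
  have hvp_a' : β₀ ^ 2 * a vp vp ≤ (Bn p) ^ 2 := by
    have := mul_le_mul_of_nonneg_left hvp_a hβ.le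
    calc β₀ ^ 2 * a vp vp ≤ β₀ ^ 2 * (β₀⁻¹ ^ 2 * Bn p ^ 2) := this
      _ = (Bn p) ^ 2 := by field_simp
  simp only [coupledForm, map_add, map_smul, map_neg, smul_eq_mul,
    LinearMap.add_apply, LinearMap.smul_apply, LinearMap.neg_apply] at key ⊢
  rw [hvp_b]
  nlinarith [ha_pos vp, ha_pos u, sq_nonneg (Bn p), mul_pos hβ hβ]
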